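/- Let α be a unital twisted partial action of a group G on a unital ring R such that only finitely many of the ideals D_g are nonzero. Then R is right noetherian if and only if the partial crossed product R*_{α,w}G is right noetherian. -/

import Mathlib

/-- A unital twisted partial action of a group `G` on a unital ring `R`
(Dokuchaev–Exel–Simón).  The ideal `D g` is the ideal generated by the central
idempotent `e g`, i.e. `D g = {x | e g * x = x}`;  `act g` is the isomorphism
`α_g : D g⁻¹ → D g` (its values outside `D g⁻¹` are irrelevant) with inverse
`inv g`, and `w g h` is the invertible twisting element of `D g * D (g*h)`
with inverse `winv g h`. -/
structure UnitalTwistedPartialAction (G : Type) [Group G] (R : Type) [Ring R] where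
  e : G → R
  idem : ∀ g, e g * e g = e g
  central : ∀ g r, e g * r = r * e g
  e_one : e 1 = 1
  act : G → R → R
  inv : G → R → R
  w : G → G → R
  winv : G → G → R
  act_mem : ∀ g x, e g⁻¹ * x = x → e g * act g x = act g x
  act_add : ∀ g x y, e g⁻¹ * x = x → e g⁻¹ * y = y →
    act g (x + y) = act g x + act g y
  act_mul : ∀ g x y, e g⁻¹ * x = x → e g⁻¹ * y = y →
    act g (x * y) = act g x * act g y
  inv_act : ∀ g x, e g⁻¹ * x = x → inv g (act g x) = x
  act_inv : ∀ g x, e g * x = x → act g (inv g x) = x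
  act_one : ∀ x, act 1 x = x
  -- α_g(D_{g⁻¹} D_h) = D_g D_{gh}
  act_range : ∀ g h x, e g⁻¹ * x = x → e h * x = x → e (g * h) * act g x = act g x
  act_range' : ∀ g h y, e g * y = y → e (g * h) * y = y →
    ∃ x, e g⁻¹ * x = x ∧ e h * x = x ∧ act g x = y
  w_mem : ∀ g h, e g * w g h = w g h ∧ e (g * h) * w g h = w g h
  w_winv : ∀ g h, w g h * winv g h = e g * e (g * h)
  winv_w : ∀ g h, winv g h * w g h = e g * e (g * h)
  w_one_left : ∀ g, w 1 g = e g
  w_one_right : ∀ g, w g 1 = e g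
  -- α_g ∘ α_h (a) = w_{g,h} α_{gh}(a) w_{g,h}⁻¹  for a ∈ D_{h⁻¹} D_{(gh)⁻¹}
  comp : ∀ g h a, e h⁻¹ * a = a → e (h⁻¹ * g⁻¹) * a = a →
    act g (act h a) = w g h * act (g * h) a * winv g h
  -- the cocycle identity α_g(a w_{h,t}) w_{g,ht} = α_g(a) w_{g,h} w_{gh,t}
  cocycle : ∀ g h t a, e g⁻¹ * a = a → e h * a = a → e (h * t) * a = a →
    act g (a * w h t) * w g (h * t) = act g a * w g h * w (g * h) t

/-- A realization of the partial crossed product `R *_{α,w} G`:  a ring `A`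
together with maps `δ g : D g → A` (written as maps `R → A` that only depend
on the `D g`-component) such that `A = ⊕_{g ∈ G} δ g (D g)` with the crossed
product multiplication `(a δ_g)(b δ_h) = α_g(α_g⁻¹(a) b) w_{g,h} δ_{gh}`. -/
structure IsCrossedProduct {G R : Type} [Group G] [Ring R]
    (pa : UnitalTwistedPartialAction G R) (A : Type) [Ring A]
    (δ : G → R → A) : Prop where
  proj : ∀ g a, δ g a = δ g (pa.e g * a)
  add : ∀ g a b, δ g (a + b) = δ g a + δ g b
  mul : ∀ g h a b, pa.e g * a = a → pa.e h * b = b →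
    δ g a * δ h b = δ (g * h) (pa.act g (pa.inv g a * b) * pa.w g h)
  one : δ 1 1 = 1
  indep : ∀ (s : Finset G) (a : G → R), (∀ g, pa.e g * a g = a g) →
    (∑ g ∈ s, δ g (a g)) = 0 → ∀ g ∈ s, a g = 0
  span : ∀ x : A, ∃ (s : Finset G) (a : G → R),
    (∀ g, pa.e g * a g = a g) ∧ x = ∑ g ∈ s, δ g (a g)

/-- A ring is semilocal if it is semisimple modulo its Jacobson radical. -/
def IsSemilocalRing (A : Type) [Ring A] : Prop :=
  IsSemisimpleRing (TwoSidedIdeal.jacobson (⊥ : TwoSidedIdeal A)).ringCon.Quotient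

/-- A ring is semiprimary if it is semilocal and its Jacobson radical is nilpotent. -/
def IsSemiprimaryRing' (A : Type) [Ring A] : Prop :=
  IsSemilocalRing A ∧ ∃ n : ℕ, 0 < n ∧ ∀ f : Fin n → A,
    (∀ i, f i ∈ TwoSidedIdeal.jacobson (⊥ : TwoSidedIdeal A)) →
      (List.ofFn f).prod = 0

/-- A ring is right artinian iff its opposite ring is (left) artinian. -/
def IsRightArtinianRing (A : Type) [Ring A] : Prop := IsArtinianRing Aᵐᵒᵖ

/-- A ring is right noetherian iff its opposite ring is (left) noetherian. -/
def IsRightNoetherianRing (A : Type) [Ring A] : Prop := IsNoetherianRing Aᵐᵒᵖ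

namespace CPAux

open MulOpposite

open scoped Classical

variable {G R : Type} [Group G] [Ring R] {pa : UnitalTwistedPartialAction G R}
  {A : Type} [Ring A] {δ : G → R → A}

lemma inv_one' (pa : UnitalTwistedPartialAction G R) (x : R) : pa.inv 1 x = x := by
  have h := pa.inv_act 1 x (by rw [inv_one, pa.e_one, one_mul])
  rwa [pa.act_one] at h

variable (hcp : IsCrossedProduct pa A δ)
include hcp

lemma delta_zero (g : G) : δ g 0 = 0 := by
  have h := hcp.add g 0 0
  rw [add_zero] at h
  exact (left_eq_add.mp h)

lemma delta_sub (g : G) (x y : R) : δ g (x - y) = δ g x - δ g y := by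
  have h := hcp.add g (x - y) y
  rw [sub_add_cancel] at h
  exact eq_sub_of_add_eq h.symm

lemma decomp_unique (s t : Finset G) (a b : G → R)
    (ha : ∀ g, pa.e g * a g = a g) (hb : ∀ g, pa.e g * b g = b g)
    (h : ∑ g ∈ s, δ g (a g) = ∑ g ∈ t, δ g (b g)) (g : G) :
    (if g ∈ s then a g else 0) = (if g ∈ t then b g else 0) := by
  have hce : ∀ g : G, pa.e g *
      ((if g ∈ s then a g else 0) - (if g ∈ t then b g else 0))
      = (if g ∈ s then a g else 0) - (if g ∈ t then b g else 0) := by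
    intro g
    rw [mul_sub]
    congr 1 <;> split_ifs <;> simp [ha, hb]
  have hs1 : ∑ g ∈ s, δ g (a g) = ∑ g ∈ s ∪ t, δ g (if g ∈ s then a g else 0) := by
    rw [← Finset.sum_subset Finset.subset_union_left
      (fun g _ hg => by rw [if_neg hg]; exact delta_zero hcp g)]
    exact Finset.sum_congr rfl fun g hg => by rw [if_pos hg]
  have ht1 : ∑ g ∈ t, δ g (b g) = ∑ g ∈ s ∪ t, δ g (if g ∈ t then b g else 0) := by
    rw [← Finset.sum_subset Finset.subset_union_right
      (fun g _ hg => by rw [if_neg hg]; exact delta_zero hcp g)]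
    exact Finset.sum_congr rfl fun g hg => by rw [if_pos hg]
  have hzero : ∑ g ∈ s ∪ t, δ g
      ((if g ∈ s then a g else 0) - (if g ∈ t then b g else 0)) = 0 := by
    have h2 : ∀ g ∈ s ∪ t, δ g
        ((if g ∈ s then a g else 0) - (if g ∈ t then b g else 0))
        = δ g (if g ∈ s then a g else 0) - δ g (if g ∈ t then b g else 0) :=
      fun g _ => delta_sub hcp g _ _
    rw [Finset.sum_congr rfl h2, Finset.sum_sub_distrib, ← hs1, ← ht1, h, sub_self]
  have hind := hcp.indep (s ∪ t)
    (fun g => (if g ∈ s then a g else 0) - (if g ∈ t then b g else 0)) hce hzero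
  by_cases hg : g ∈ s ∪ t
  · exact sub_eq_zero.mp (hind g hg)
  · rw [Finset.mem_union] at hg
    push_neg at hg
    rw [if_neg hg.1, if_neg hg.2]

noncomputable def coeff (x : A) (g : G) : R :=
  if g ∈ (hcp.span x).choose then (hcp.span x).choose_spec.choose g else 0

lemma coeff_mem (x : A) (g : G) : pa.e g * coeff hcp x g = coeff hcp x g := by
  unfold coeff
  split_ifs with h
  · exact (hcp.span x).choose_spec.choose_spec.1 g
  · exact mul_zero _

lemma coeff_spec (x : A) : ∃ s : Finset G,
    (∀ g, g ∉ s → coeff hcp x g = 0) ∧ x = ∑ g ∈ s, δ g (coeff hcp x g) := by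
  refine ⟨(hcp.span x).choose, fun g hg => by unfold coeff; rw [if_neg hg], ?_⟩
  obtain ⟨-, hx⟩ := (hcp.span x).choose_spec.choose_spec
  exact hx.trans (Finset.sum_congr rfl fun g hg => by unfold coeff; rw [if_pos hg])

lemma coeff_eq (x : A) (s : Finset G) (a : G → R) (ha : ∀ g, pa.e g * a g = a g)
    (hx : x = ∑ g ∈ s, δ g (a g)) (g : G) :
    coeff hcp x g = (if g ∈ s then a g else 0) := by
  obtain ⟨ha0, hx0⟩ := (hcp.span x).choose_spec.choose_spec
  have h1 : coeff hcp x g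
      = if g ∈ (hcp.span x).choose then (hcp.span x).choose_spec.choose g else 0 := rfl
  rw [h1]
  exact decomp_unique hcp (hcp.span x).choose s (hcp.span x).choose_spec.choose a
    ha0 ha (by rw [← hx0, ← hx]) g

lemma coeff_zero (g : G) : coeff hcp (0 : A) g = 0 := by
  have h := coeff_eq hcp 0 ∅ (fun _ => 0) (fun _ => mul_zero _) (by simp) g
  simpa using h

lemma coeff_add (x y : A) (g : G) :
    coeff hcp (x + y) g = coeff hcp x g + coeff hcp y g := by
  classical
  obtain ⟨s, hs0, hs⟩ := coeff_spec hcp x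
  obtain ⟨t, ht0, ht⟩ := coeff_spec hcp y
  have hx' : x = ∑ g ∈ s ∪ t, δ g (coeff hcp x g) :=
    hs.trans (Finset.sum_subset Finset.subset_union_left
      (fun g _ hg => by rw [hs0 g hg]; exact delta_zero hcp g))
  have hy' : y = ∑ g ∈ s ∪ t, δ g (coeff hcp y g) :=
    ht.trans (Finset.sum_subset Finset.subset_union_right
      (fun g _ hg => by rw [ht0 g hg]; exact delta_zero hcp g))
  have hxy : x + y = ∑ g ∈ s ∪ t, δ g (coeff hcp x g + coeff hcp y g) := by
    conv_lhs => rw [hx', hy']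
    rw [← Finset.sum_add_distrib]
    exact Finset.sum_congr rfl fun g _ => (hcp.add g _ _).symm
  have h := coeff_eq hcp (x + y) (s ∪ t) _
    (fun g => by rw [mul_add, coeff_mem hcp, coeff_mem hcp]) hxy g
  rw [h]
  split_ifs with hg
  · rfl
  · rw [Finset.mem_union] at hg
    push_neg at hg
    rw [hs0 g hg.1, ht0 g hg.2, add_zero]

lemma coeff_sum {ι : Type*} (u : Finset ι) (f : ι → A) (g : G) :
    coeff hcp (∑ i ∈ u, f i) g = ∑ i ∈ u, coeff hcp (f i) g := by
  classical
  induction u using Finset.induction_on with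
  | empty => simpa using coeff_zero hcp g
  | insert _ _ h ih =>
    rw [Finset.sum_insert h, Finset.sum_insert h, coeff_add hcp, ih]

lemma delta_one_mul (m b : R) (h : G) (hb : pa.e h * b = b) :
    δ 1 m * δ h b = δ h (m * b) := by
  have h1 : pa.act 1 (pa.inv 1 m * b) * pa.w 1 h = m * b := by
    rw [pa.act_one, inv_one', pa.w_one_left, mul_assoc, ← pa.central, hb]
  rw [hcp.mul 1 h m b (by rw [pa.e_one, one_mul]) hb, one_mul, h1]

lemma delta_one_mul_one (a b : R) : δ 1 a * δ 1 b = δ 1 (a * b) :=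
  delta_one_mul hcp a b 1 (by rw [pa.e_one, one_mul])

lemma coeff_one_mul (m : R) (y : A) (g : G) :
    coeff hcp (δ 1 m * y) g = m * coeff hcp y g := by
  classical
  obtain ⟨t, ht0, ht⟩ := coeff_spec hcp y
  have hxy : δ 1 m * y = ∑ h ∈ t, δ h (m * coeff hcp y h) := by
    conv_lhs => rw [ht, Finset.mul_sum]
    exact Finset.sum_congr rfl fun h _ => delta_one_mul hcp m _ h (coeff_mem hcp y h)
  have h := coeff_eq hcp _ t _
    (fun g' => by rw [← mul_assoc, pa.central g' m, mul_assoc, coeff_mem hcp y g']) hxy g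
  rw [h]
  split_ifs with hg
  · rfl
  · rw [ht0 g hg, mul_zero]

lemma coeff_delta_one (m : R) (g : G) :
    coeff hcp (δ 1 m) g = if g = 1 then m else 0 := by
  classical
  have hx : δ 1 m = ∑ h ∈ ({1} : Finset G), δ h (if h = 1 then m else 0) := by simp
  have h := coeff_eq hcp _ ({1} : Finset G) _
    (fun g' => by
      split_ifs with h'
      · subst h'; rw [pa.e_one, one_mul]
      · exact mul_zero _) hx g
  rw [h]
  by_cases hg : g = 1 <;> simp [hg]

lemma delta_gen (g : G) (a : R) (ha : pa.e g * a = a) :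
    δ g (pa.act g (pa.e g⁻¹)) * δ 1 (pa.inv g a) = δ g a := by
  obtain ⟨x, hx1, -, hx3⟩ := pa.act_range' g 1 a ha (by rwa [mul_one])
  have hinv : pa.inv g a = x := by rw [← hx3, pa.inv_act g x hx1]
  have hb : pa.e g * pa.act g (pa.e g⁻¹) = pa.act g (pa.e g⁻¹) :=
    pa.act_mem g _ (pa.idem g⁻¹)
  rw [hcp.mul g 1 _ _ hb (by rw [pa.e_one, one_mul]), mul_one,
    pa.inv_act g _ (pa.idem g⁻¹), pa.w_one_right, hinv, hx1,
    ← pa.central g (pa.act g x), pa.act_mem g x hx1, hx3]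

lemma coeff_mem_of_mem_span (M : Submodule Rᵐᵒᵖ Rᵐᵒᵖ) (z : A)
    (hz : op z ∈ Submodule.span Aᵐᵒᵖ
      ((fun m : Rᵐᵒᵖ => op (δ 1 m.unop)) '' (M : Set Rᵐᵒᵖ)))
    (g : G) : op (coeff hcp z g) ∈ M := by
  rw [Submodule.mem_span_set'] at hz
  obtain ⟨n, c, v, hv⟩ := hz
  have hvm : ∀ i, ∃ m : Rᵐᵒᵖ, m ∈ M ∧ (v i : Aᵐᵒᵖ) = op (δ 1 m.unop) := by
    intro i
    obtain ⟨m, hm, hme⟩ := (v i).2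
    exact ⟨m, hm, hme.symm⟩
  choose m hmM hme using hvm
  have hz' : z = ∑ i, δ 1 ((m i).unop) * (c i).unop := by
    have h1 : op z = ∑ i, op (δ 1 ((m i).unop) * (c i).unop) := by
      rw [← hv]
      refine Finset.sum_congr rfl fun i _ => ?_
      rw [hme i, smul_eq_mul, op_mul, op_unop]
    have h2 := congrArg unop h1
    rwa [unop_op, Finset.unop_sum] at h2
  rw [hz', coeff_sum hcp, Finset.op_sum]
  refine Submodule.sum_mem M fun i _ => ?_
  rw [coeff_one_mul hcp]
  have h3 : (op ((m i).unop * coeff hcp ((c i).unop) g) : Rᵐᵒᵖ)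
      = op (coeff hcp ((c i).unop) g) * m i := by
    rw [← op_unop (m i), ← op_mul, op_unop]
  rw [h3]
  have := M.smul_mem (op (coeff hcp ((c i).unop) g)) (hmM i)
  rwa [smul_eq_mul] at this

end CPAux

open MulOpposite CPAux in
/-- Let `α` be a unital twisted partial action of `G` on `R`
such that only finitely many of the ideals `D_g` are nonzero.  Then `R` is
right noetherian if and only if `R*_{α,w}G` is right noetherian. -/
theorem crossedProduct_rightNoetherian_iff_of_finite_support
    {G R : Type} [Group G] [Ring R]
    (pa : UnitalTwistedPartialAction G R)
    (hfin : {g : G | pa.e g ≠ 0}.Finite)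
    (A : Type) [Ring A] (δ : G → R → A)
    (hcp : IsCrossedProduct pa A δ) :
    IsRightNoetherianRing R ↔ IsRightNoetherianRing A := by
  classical
  constructor
  · -- forward
    intro hR
    haveI hR' : IsNoetherianRing Rᵐᵒᵖ := hR
    show IsNoetherianRing Aᵐᵒᵖ
    let φ : Rᵐᵒᵖ →+* Aᵐᵒᵖ :=
      { toFun := fun r => op (δ 1 r.unop)
        map_one' := by
          show op (δ 1 (unop (1 : Rᵐᵒᵖ))) = 1
          rw [unop_one, hcp.one, op_one]
        map_mul' := fun x y => by
          show op (δ 1 (x * y).unop) = op (δ 1 x.unop) * op (δ 1 y.unop)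
          rw [unop_mul, ← delta_one_mul_one hcp, op_mul]
        map_zero' := by
          show op (δ 1 (unop (0 : Rᵐᵒᵖ))) = 0
          rw [unop_zero, delta_zero hcp, op_zero]
        map_add' := fun x y => by
          show op (δ 1 (x + y).unop) = op (δ 1 x.unop) + op (δ 1 y.unop)
          rw [unop_add, hcp.add, op_add] }
    letI : Module Rᵐᵒᵖ Aᵐᵒᵖ := Module.compHom Aᵐᵒᵖ φ
    have hsmul : ∀ (r : Rᵐᵒᵖ) (x : Aᵐᵒᵖ), r • x = op (δ 1 r.unop) * x := fun r x => rfl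
    haveI : IsScalarTower Rᵐᵒᵖ Aᵐᵒᵖ Aᵐᵒᵖ := ⟨fun r s x => by
      simp only [hsmul, smul_eq_mul, mul_assoc]⟩
    haveI : Module.Finite Rᵐᵒᵖ Aᵐᵒᵖ := by
      constructor
      refine ⟨Finset.image (fun g => op (δ g (pa.act g (pa.e g⁻¹)))) hfin.toFinset, ?_⟩
      rw [eq_top_iff]
      rintro x -
      obtain ⟨s, hs0, hsx⟩ := coeff_spec hcp x.unop
      have hx : x = ∑ g ∈ s, op (δ g (coeff hcp x.unop g)) := by
        rw [← Finset.op_sum, ← hsx, op_unop]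
      rw [hx]
      refine Submodule.sum_mem _ fun g hg => ?_
      by_cases hc : coeff hcp x.unop g = 0
      · rw [hc, delta_zero hcp, op_zero]
        exact Submodule.zero_mem _
      · have heg : pa.e g ≠ 0 := fun h0 => hc (by rw [← coeff_mem hcp x.unop g, h0, zero_mul])
        have hgen : (op (δ g (pa.act g (pa.e g⁻¹))) : Aᵐᵒᵖ) ∈
            (Finset.image (fun g => op (δ g (pa.act g (pa.e g⁻¹)))) hfin.toFinset : Set Aᵐᵒᵖ) := by
          simp only [Finset.coe_image, Set.mem_image, Finset.mem_coe, Set.Finite.mem_toFinset]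
          exact ⟨g, heg, rfl⟩
        have hkey : (op (pa.inv g (coeff hcp x.unop g)) : Rᵐᵒᵖ) •
            (op (δ g (pa.act g (pa.e g⁻¹))) : Aᵐᵒᵖ) = op (δ g (coeff hcp x.unop g)) := by
          rw [hsmul, unop_op, ← op_mul, delta_gen hcp g _ (coeff_mem hcp x.unop g)]
        rw [← hkey]
        exact Submodule.smul_mem _ _ (Submodule.subset_span hgen)
    exact isNoetherian_of_tower Rᵐᵒᵖ
      (isNoetherian_of_isNoetherianRing_of_finite Rᵐᵒᵖ Aᵐᵒᵖ)
  · -- backward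
    intro hA
    have hA' : IsNoetherian Aᵐᵒᵖ Aᵐᵒᵖ := hA
    show IsNoetherianRing Rᵐᵒᵖ
    rw [isNoetherianRing_iff, isNoetherian_iff]
    let f : Submodule Rᵐᵒᵖ Rᵐᵒᵖ → Submodule Aᵐᵒᵖ Aᵐᵒᵖ := fun M =>
      Submodule.span Aᵐᵒᵖ ((fun m : Rᵐᵒᵖ => op (δ 1 m.unop)) '' (M : Set Rᵐᵒᵖ))
    have hle : ∀ M N, f M ≤ f N ↔ M ≤ N := by
      intro M N
      constructor
      · intro h m hm
        have h1 : (op (δ 1 m.unop) : Aᵐᵒᵖ) ∈ f M :=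
          Submodule.subset_span ⟨m, hm, rfl⟩
        have h2 := coeff_mem_of_mem_span hcp N (δ 1 m.unop) (h h1) 1
        rw [coeff_delta_one hcp m.unop 1, if_pos rfl, op_unop] at h2
        exact h2
      · intro h
        exact Submodule.span_mono (Set.image_mono h)
    have hinj : Function.Injective f := fun M N h =>
      le_antisymm ((hle M N).mp h.le) ((hle N M).mp h.ge)
    exact (RelEmbedding.mk ⟨f, hinj⟩ (by
      intro a b
      simp only [Function.Embedding.coeFn_mk, gt_iff_lt, lt_iff_le_not_ge, hle])).wellFounded
      (isNoetherian_iff.mp hA')
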